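/- Let F : 2^V → [0,∞] be monotone (F(A) ≤ F(B) whenever A ⊆ B) with F(∅) = 0, and define Θ_∞ : ℝ^V → [0,∞] by Θ_∞(w) = inf{ Σ_{S⊆V} α_S F(S) : α_S ≥ 0, Σ_{S⊆V} α_S = 1, Σ_{S : i∈S} α_S ≥ |w_i| for all i ∈ V } (with inf ∅ = ∞). If J ⊆ V is strongly stable with respect to F, then J is strongly stable with respect to Θ_∞: for every w ∈ ℝ^V with supp(w) ⊆ J there exists M > 0 such that Θ_∞(w + Δ) ≥ Θ_∞(w) + M‖Δ‖_∞ (inequality in [0,∞]) for all Δ ∈ ℝ^V with supp(Δ) ⊆ Jᶜ. -/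

import Mathlib

open scoped BigOperators ENNReal

/-- The non-homogeneous `ℓ∞`-relaxation `Θ_∞` with values in `[0,∞]` (`sInf ∅ = ∞`). -/
noncomputable def thetaInfE {V : Type*} [Fintype V] [DecidableEq V]
    (F : Finset V → ℝ≥0∞) (w : V → ℝ) : ℝ≥0∞ :=
  sInf { t : ℝ≥0∞ | ∃ α : Finset V → ℝ,
    (∀ S, 0 ≤ α S) ∧ (∑ S : Finset V, α S) = 1 ∧
    (∀ i : V, |w i| ≤ ∑ S : Finset V, if i ∈ S then α S else 0) ∧
    t = ∑ S : Finset V, ENNReal.ofReal (α S) * F S }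

theorem stmt_12 {V : Type*} [Fintype V] [DecidableEq V]
    (F : Finset V → ℝ≥0∞) (hF0 : F ∅ = 0)
    (hmono : ∀ A B : Finset V, A ⊆ B → F A ≤ F B)
    (J : Finset V)
    (hJ : ∀ A ⊆ J, ∀ i ∉ J, F A < F (insert i A)) :
    ∀ w : V → ℝ, (∀ i, w i ≠ 0 → i ∈ J) →
      ∃ M : ℝ, 0 < M ∧ ∀ Δ : V → ℝ, (∀ i ∈ J, Δ i = 0) →
        thetaInfE F w + ENNReal.ofReal (M * (⨆ i, |Δ i|)) ≤ thetaInfE F (w + Δ) := by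
  classical
  intro w hw
  -- the minimal marginal gain of adding an element outside `J`
  set ε : ℝ≥0∞ := Finset.univ.inf (fun p : Finset V × V =>
    if p.1 ⊆ J ∧ p.2 ∉ J then F (insert p.2 p.1) - F p.1 else ⊤) with hε
  have hεpos : 0 < ε := by
    rw [hε, Finset.lt_inf_iff (by exact ENNReal.zero_lt_top)]
    intro p _
    by_cases hp : p.1 ⊆ J ∧ p.2 ∉ J
    · rw [if_pos hp, tsub_pos_iff_lt]
      exact hJ p.1 hp.1 p.2 hp.2
    · rw [if_neg hp]; exact ENNReal.zero_lt_top
  set εm : ℝ≥0∞ := min ε 1 with hεm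
  have hεm_pos : 0 < εm := lt_min hεpos zero_lt_one
  have hεm_ne_top : εm ≠ ⊤ := by
    exact ne_top_of_le_ne_top ENNReal.one_ne_top (min_le_right _ _)
  have hεF : ∀ S : Finset V, ¬ S ⊆ J → F (S ∩ J) + εm ≤ F S := by
    intro S hS
    obtain ⟨i, hiS, hiJ⟩ := Finset.not_subset.mp hS
    have hA : S ∩ J ⊆ J := Finset.inter_subset_right
    have hkey := hJ (S ∩ J) hA i hiJ
    have hεle : ε ≤ F (insert i (S ∩ J)) - F (S ∩ J) := by
      refine le_trans (Finset.inf_le (Finset.mem_univ ((S ∩ J, i) : Finset V × V))) ?_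
      simp [hA, hiJ]
    calc F (S ∩ J) + εm ≤ F (S ∩ J) + (F (insert i (S ∩ J)) - F (S ∩ J)) :=
          add_le_add_right (le_trans (min_le_left _ _) hεle) _
      _ = F (insert i (S ∩ J)) := add_tsub_cancel_of_le hkey.le
      _ ≤ F S := hmono _ _ (Finset.insert_subset hiS Finset.inter_subset_left)
  refine ⟨εm.toReal, ENNReal.toReal_pos hεm_pos.ne' hεm_ne_top, ?_⟩
  intro Δ hΔ
  set D : ℝ := ⨆ i, |Δ i| with hD
  have hD0 : 0 ≤ D := Real.iSup_nonneg (fun i => abs_nonneg _)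
  rw [ENNReal.ofReal_mul (ENNReal.toReal_nonneg), ENNReal.ofReal_toReal hεm_ne_top]
  refine le_sInf ?_
  rintro t ⟨α, hα0, hα1, hαcov, rfl⟩
  -- Step A : Θ(w) ≤ ∑ ofReal (α S) * F (S ∩ J)
  have hA : thetaInfE F w ≤ ∑ S : Finset V, ENNReal.ofReal (α S) * F (S ∩ J) := by
    apply sInf_le
    refine ⟨fun T => ∑ S ∈ Finset.univ.filter (fun S => S ∩ J = T), α S,
      fun T => Finset.sum_nonneg fun S _ => hα0 S, ?_, ?_, ?_⟩
    · rw [Finset.sum_fiberwise]; exact hα1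
    · intro i
      have hrw : (∑ T : Finset V, if i ∈ T then
            (∑ S ∈ Finset.univ.filter (fun S => S ∩ J = T), α S) else 0)
          = ∑ S : Finset V, if i ∈ S ∩ J then α S else 0 := by
        rw [← Finset.sum_fiberwise Finset.univ (fun S => S ∩ J)
          (fun S => if i ∈ S ∩ J then α S else 0)]
        refine Finset.sum_congr rfl (fun T _ => ?_)
        by_cases hiT : i ∈ T
        · rw [if_pos hiT]
          refine Finset.sum_congr rfl (fun S hS => ?_)
          rw [Finset.mem_filter] at hS
          rw [hS.2, if_pos hiT]
        · rw [if_neg hiT]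
          refine (Finset.sum_eq_zero (fun S hS => ?_)).symm
          rw [Finset.mem_filter] at hS
          rw [hS.2, if_neg hiT]
      rw [hrw]
      by_cases hiJ : i ∈ J
      · have hcov := hαcov i
        have hwi : |(w + Δ) i| = |w i| := by
          simp [Pi.add_apply, hΔ i hiJ]
        have : (∑ S : Finset V, if i ∈ S ∩ J then α S else 0)
            = ∑ S : Finset V, if i ∈ S then α S else 0 := by
          refine Finset.sum_congr rfl (fun S _ => ?_)
          simp [Finset.mem_inter, hiJ]
        rw [this]
        calc |w i| = |(w + Δ) i| := hwi.symm
          _ ≤ _ := hcov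
      · have hwi : w i = 0 := by
          by_contra h; exact hiJ (hw i h)
        rw [hwi, abs_zero]
        refine Finset.sum_nonneg (fun S _ => ?_)
        split <;> simp [hα0 S]
    · rw [← Finset.sum_fiberwise Finset.univ (fun S => S ∩ J)
        (fun S => ENNReal.ofReal (α S) * F (S ∩ J))]
      refine Finset.sum_congr rfl (fun T _ => ?_)
      rw [ENNReal.ofReal_sum_of_nonneg (fun S _ => hα0 S), Finset.sum_mul]
      refine Finset.sum_congr rfl (fun S hS => ?_)
      rw [Finset.mem_filter] at hS
      rw [hS.2]
  -- Step B : εm * ofReal D ≤ extra mass on sets not included in J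
  have hB : εm * ENNReal.ofReal D
      ≤ ∑ S : Finset V, (if S ⊆ J then 0 else ENNReal.ofReal (α S) * εm) := by
    by_cases hDpos : D ≤ 0
    · have : ENNReal.ofReal D = 0 := ENNReal.ofReal_eq_zero.mpr hDpos
      rw [this, mul_zero]; exact zero_le
    push_neg at hDpos
    have hne : Nonempty V := by
      by_contra h
      rw [not_nonempty_iff] at h
      have h0 : D = 0 := by
        rw [hD, iSup, Set.range_eq_empty, Real.sSup_empty]
      exact hDpos.ne' h0
    obtain ⟨i₀, hi₀max⟩ := Finite.exists_max (fun i => |Δ i|)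
    have hDle : D ≤ |Δ i₀| := ciSup_le hi₀max
    have hi₀J : i₀ ∉ J := by
      intro h
      rw [hΔ i₀ h, abs_zero] at hDle
      exact absurd (lt_of_lt_of_le hDpos hDle) (lt_irrefl 0)
    have hwi₀ : w i₀ = 0 := by
      by_contra h; exact hi₀J (hw i₀ h)
    have hcov : |Δ i₀| ≤ ∑ S : Finset V, if i₀ ∈ S then α S else 0 := by
      have := hαcov i₀
      rwa [Pi.add_apply, hwi₀, zero_add] at this
    calc εm * ENNReal.ofReal D ≤ εm * ENNReal.ofReal (∑ S : Finset V, if i₀ ∈ S then α S else 0) :=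
          mul_le_mul_right (ENNReal.ofReal_le_ofReal (le_trans hDle hcov)) _
      _ = ∑ S : Finset V, εm * (if i₀ ∈ S then ENNReal.ofReal (α S) else 0) := by
          rw [ENNReal.ofReal_sum_of_nonneg (fun S _ => by split <;> simp [hα0 S]), Finset.mul_sum]
          refine Finset.sum_congr rfl (fun S _ => ?_)
          congr 1
          split <;> simp
      _ ≤ _ := by
          refine Finset.sum_le_sum (fun S _ => ?_)
          by_cases hiS : i₀ ∈ S
          · have hSJ : ¬ S ⊆ J := fun h => hi₀J (h hiS)
            rw [if_pos hiS, if_neg hSJ, mul_comm]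
          · rw [if_neg hiS, mul_zero]
            exact zero_le
  -- Step C : combine
  calc thetaInfE F w + εm * ENNReal.ofReal D
      ≤ (∑ S : Finset V, ENNReal.ofReal (α S) * F (S ∩ J))
        + ∑ S : Finset V, (if S ⊆ J then 0 else ENNReal.ofReal (α S) * εm) :=
        add_le_add hA hB
    _ ≤ ∑ S : Finset V, ENNReal.ofReal (α S) * F S := by
        rw [← Finset.sum_add_distrib]
        refine Finset.sum_le_sum (fun S _ => ?_)
        by_cases hS : S ⊆ J
        · rw [if_pos hS, add_zero, Finset.inter_eq_left.mpr hS]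
        · rw [if_neg hS, ← mul_add]
          exact mul_le_mul_right (hεF S hS) _
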